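/- (Failure mode, existence part.) There exist positive integers m, d_x, d_θ (with d_y = 1), a loss criterion ℓ : ℝ × ℝ → ℝ such that q ↦ ℓ(q, y) is differentiable, convex, and nonnegative for every y, a differentiable function f : ℝ^{d_x} × ℝ^{d_θ} → ℝ, data (x_i, y_i)_{i=1}^m, λ > 0, and a parameter θ ∈ ℝ^{d_θ} such that: θ is a stationary point of L (the gradient of L at θ is zero), θ is not a global minimum of L, and for every (a, b, W) ∈ ℝ × ℝ × ℝ^{d_x}, the gradient of the map θ' ↦ L̃(θ', a, b, W) at θ' = θ is zero. -/

import Mathlib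

open scoped RealInnerProductSpace

noncomputable section

private abbrev E1 := EuclideanSpace ℝ (Fin 1)

private lemma grad_comp_zero (h : ℝ → ℝ) (θ : E1) (hd : HasDerivAt h 0 (θ 0)) :
    gradient (fun θ' : E1 => h (θ' 0)) θ = 0 := by
  have hproj : HasFDerivAt (fun θ' : E1 => θ' 0)
      (EuclideanSpace.proj (0 : Fin 1) : E1 →L[ℝ] ℝ) θ :=
    (EuclideanSpace.proj (0 : Fin 1) : E1 →L[ℝ] ℝ).hasFDerivAt
  have hF : HasFDerivAt (fun θ' : E1 => h (θ' 0)) (0 : E1 →L[ℝ] ℝ) θ := by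
    have := hd.hasFDerivAt.comp θ hproj
    refine this.congr_fderiv ?_
    ext v
    simp
  have : HasGradientAt (fun θ' : E1 => h (θ' 0)) 0 θ := by
    rw [hasGradientAt_iff_hasFDerivAt]
    simpa using hF
  exact this.gradient

/-- **Failure mode, existence part.** There exist positive integers
`m, dx, dθ` (with `d_y = 1`), a loss `ℓ` that is differentiable, convex and nonnegative
in its first argument for every target, a differentiable network `f`, data, `λ > 0`
and a parameter `θ` such that `θ` is a stationary point of `L` but not a global minimum
of `L`, and for every `(a, b, w)` the gradient of `θ' ↦ L̃(θ', a, b, w)` at `θ` is zero. -/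
theorem failure_mode_exists :
    ∃ (m dx dθ : ℕ), 0 < m ∧ 0 < dx ∧ 0 < dθ ∧
    ∃ (ℓ : ℝ → ℝ → ℝ)
      (f : EuclideanSpace ℝ (Fin dx) → EuclideanSpace ℝ (Fin dθ) → ℝ)
      (x : Fin m → EuclideanSpace ℝ (Fin dx)) (y : Fin m → ℝ)
      (lam : ℝ) (θ : EuclideanSpace ℝ (Fin dθ)),
      -- the loss is differentiable, convex and nonnegative in its first argument
      (∀ yv : ℝ, Differentiable ℝ (fun q => ℓ q yv) ∧
        ConvexOn ℝ Set.univ (fun q => ℓ q yv) ∧ ∀ q : ℝ, 0 ≤ ℓ q yv) ∧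
      -- the network is differentiable
      Differentiable ℝ
        (fun p : EuclideanSpace ℝ (Fin dx) × EuclideanSpace ℝ (Fin dθ) => f p.1 p.2) ∧
      0 < lam ∧
      -- θ is a stationary point of L
      gradient (fun θ' => (1 / (m : ℝ)) * ∑ i, ℓ (f (x i) θ') (y i)) θ = 0 ∧
      -- θ is not a global minimum of L
      ¬ (∀ θ' : EuclideanSpace ℝ (Fin dθ),
          (1 / (m : ℝ)) * ∑ i, ℓ (f (x i) θ) (y i) ≤
          (1 / (m : ℝ)) * ∑ i, ℓ (f (x i) θ') (y i)) ∧
      -- the gradient of θ' ↦ L̃(θ', a, b, w) at θ is zero, for every (a, b, w)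
      ∀ (a b : ℝ) (w : EuclideanSpace ℝ (Fin dx)),
        gradient (fun θ' =>
          (1 / (m : ℝ)) * ∑ i, ℓ (f (x i) θ' + a * Real.exp (⟪w, x i⟫ + b)) (y i)
            + lam * a ^ 2) θ = 0 := by
  refine ⟨1, 1, 1, one_pos, one_pos, one_pos,
    (fun q yv => (q - yv) ^ 2),
    (fun _ θ => (θ 0) ^ 3),
    (fun _ => 0), (fun _ => 1), 1, 0, ?_, ?_, one_pos, ?_, ?_, ?_⟩
  · intro yv
    refine ⟨?_, ?_, fun q => sq_nonneg _⟩
    · exact (differentiable_id.sub_const yv).pow 2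
    · have h := (Even.convexOn_pow (even_two)).comp_affineMap
        (AffineMap.id ℝ ℝ - AffineMap.const ℝ ℝ yv)
      simpa [Function.comp_def] using h
  · have hc : Differentiable ℝ (fun p : E1 × E1 => p.2 0) :=
      ((EuclideanSpace.proj (0 : Fin 1)).comp (ContinuousLinearMap.snd ℝ E1 E1)).differentiable
    exact hc.pow 3
  · -- stationarity of L at θ = 0
    apply grad_comp_zero (fun t => (1 / ((1 : ℕ) : ℝ)) * ∑ _i : Fin 1, (t ^ 3 - 1) ^ 2)
    have h1 : HasDerivAt (fun t : ℝ => (1 / ((1 : ℕ) : ℝ)) * ∑ _i : Fin 1, (t ^ 3 - 1) ^ 2)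
        ((1 / ((1 : ℕ) : ℝ)) * (2 * ((0:ℝ) ^ 3 - 1) ^ 1 * (3 * (0:ℝ) ^ 2))) (0 : ℝ) := by
      have h2 : HasDerivAt (fun t : ℝ => (t ^ 3 - 1) ^ 2)
          (2 * ((0:ℝ) ^ 3 - 1) ^ 1 * (3 * (0:ℝ) ^ 2)) (0 : ℝ) := by
        have h3 : HasDerivAt (fun t : ℝ => t ^ 3 - 1) (3 * (0:ℝ) ^ 2) (0 : ℝ) := by
          simpa using (hasDerivAt_pow 3 (0:ℝ)).sub_const 1
        simpa using h3.fun_pow 2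
      simpa [Fin.sum_univ_one] using h2.const_mul (1 / ((1 : ℕ) : ℝ))
    simpa using h1
  · -- θ = 0 is not a global minimum
    push_neg
    refine ⟨(WithLp.toLp 2 (fun _ => 1) : EuclideanSpace ℝ (Fin 1)), ?_⟩
    norm_num [Fin.sum_univ_one]
  · -- stationarity of the modified objective
    intro a b w
    set c : ℝ := a * Real.exp (⟪w, (0 : E1)⟫ + b) with hc
    apply grad_comp_zero
      (fun t => (1 / ((1 : ℕ) : ℝ)) * ∑ _i : Fin 1, (t ^ 3 + c - 1) ^ 2 + 1 * a ^ 2)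
    have h2 : HasDerivAt (fun t : ℝ => (t ^ 3 + c - 1) ^ 2)
        (2 * ((0:ℝ) ^ 3 + c - 1) ^ 1 * (3 * (0:ℝ) ^ 2)) (0 : ℝ) := by
      have h3 : HasDerivAt (fun t : ℝ => t ^ 3 + c - 1) (3 * (0:ℝ) ^ 2) (0 : ℝ) := by
        simpa using ((hasDerivAt_pow 3 (0:ℝ)).add_const c).sub_const 1
      simpa using h3.fun_pow 2
    have h1 := (h2.const_mul (1 / ((1 : ℕ) : ℝ))).add_const (1 * a ^ 2)
    simpa [Fin.sum_univ_one] using h1
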